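/- Let (H, m, Φ) be a weak twisted post-Hopf algebra over a field k with H cocommutative and antipode λ, and set μ̄(a ⊗ b) := Φ(a₁)·m(a₂ ⊗ b). Then the Hopf truss compatibility holds: μ̄(a ⊗ bc) = μ̄(a₁ ⊗ b) · λ(Φ(a₂)) · μ̄(a₃ ⊗ c) for all a, b, c ∈ H. -/

import Mathlib

open TensorProduct

noncomputable def mbar (k : Type*) {H : Type*} [Field k] [Ring H] [HopfAlgebra k H]
    (Φ : H →ₗ[k] H) (m : H ⊗[k] H →ₗ[k] H) : H ⊗[k] H →ₗ[k] H :=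
  (LinearMap.mul' k H) ∘ₗ (TensorProduct.map Φ m) ∘ₗ
    (TensorProduct.assoc k H H H).toLinearMap ∘ₗ
    (TensorProduct.map Coalgebra.comul LinearMap.id)

/-- The map `a ⊗ b ⊗ c ↦ ρ(a₁ ⊗ b) · λ(σ(a₂)) · ρ(a₃ ⊗ c)`. -/
noncomputable def trussRHS (k : Type*) {H : Type*} [Field k] [Ring H] [HopfAlgebra k H]
    (σ : H →ₗ[k] H) (ρ : H ⊗[k] H →ₗ[k] H) : H ⊗[k] (H ⊗[k] H) →ₗ[k] H :=
  (LinearMap.mul' k H) ∘ₗ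
    TensorProduct.map ρ
      ((LinearMap.mul' k H) ∘ₗ
        TensorProduct.map ((HopfAlgebra.antipode (R := k)) ∘ₗ σ) ρ ∘ₗ
        (TensorProduct.assoc k H H H).toLinearMap) ∘ₗ
    (TensorProduct.tensorTensorTensorComm k H (H ⊗[k] H) H H).toLinearMap ∘ₗ
    TensorProduct.map ((TensorProduct.map LinearMap.id Coalgebra.comul) ∘ₗ Coalgebra.comul)
      LinearMap.id


section Aux
open Coalgebra
variable {k H : Type*} [Field k] [Ring H] [HopfAlgebra k H]
  (m : H ⊗[k] H →ₗ[k] H) (Φ : H →ₗ[k] H)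

lemma mbar_apply (x y : H) (r : Coalgebra.Repr k x (H × H)) :
    mbar k Φ m (x ⊗ₜ y) = ∑ i ∈ r.index, Φ (r.left i) * m (r.right i ⊗ₜ y) := by
  rw [mbar]
  simp only [LinearMap.comp_apply, TensorProduct.map_tmul, LinearMap.id_coe, id_eq]
  rw [← r.eq]
  simp [TensorProduct.sum_tmul, map_sum]

lemma counit_smul_sum (x : H) (r : Coalgebra.Repr k x (H × H)) :
    ∑ i ∈ r.index, Coalgebra.counit (R := k) (r.left i) • r.right i = x := by
  have h := congrArg (TensorProduct.lid k H) (Coalgebra.sum_counit_tmul_eq r)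
  simp only [map_sum, TensorProduct.lid_tmul, one_smul] at h
  exact h

lemma key (hΦ_comul : Coalgebra.comul ∘ₗ Φ = TensorProduct.map Φ Φ ∘ₗ Coalgebra.comul)
    (hΦ_counit : Coalgebra.counit ∘ₗ Φ = Coalgebra.counit)
    (y c : H) (r : Coalgebra.Repr k y (H × H)) :
    ∑ i ∈ r.index, HopfAlgebra.antipode (R := k) (Φ (r.left i)) * mbar k Φ m (r.right i ⊗ₜ c)
      = m (y ⊗ₜ c) := by
  classical
  set s : ∀ i, Coalgebra.Repr k (r.right i) (H × H) := fun i => ℛ k (r.right i) with hs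
  set t : ∀ i, Coalgebra.Repr k (r.left i) (H × H) := fun i => ℛ k (r.left i) with ht
  have hexp : ∀ i, mbar k Φ m (r.right i ⊗ₜ c)
      = ∑ j ∈ (s i).index, Φ ((s i).left j) * m ((s i).right j ⊗ₜ c) :=
    fun i => mbar_apply m Φ _ c (s i)
  have hco := Coalgebra.sum_tmul_tmul_eq r t s
  have hP := congrArg (LinearMap.mul' k H ∘ₗ
      TensorProduct.map ((HopfAlgebra.antipode (R := k)) ∘ₗ Φ)
        (LinearMap.mul' k H ∘ₗ TensorProduct.map Φ (m ∘ₗ (TensorProduct.mk k H H).flip c))) hco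
  simp only [map_sum, LinearMap.comp_apply, TensorProduct.map_tmul, LinearMap.mul'_apply,
    TensorProduct.mk_apply, LinearMap.flip_apply] at hP
  simp only [hexp, Finset.mul_sum]
  rw [← hP]
  have hant : ∀ i, ∑ j ∈ (t i).index,
      HopfAlgebra.antipode (R := k) (Φ ((t i).left j)) * Φ ((t i).right j)
      = algebraMap k H (Coalgebra.counit (R := k) (r.left i)) := by
    intro i
    have heq : ∑ j ∈ (t i).index, Φ ((t i).left j) ⊗ₜ[k] Φ ((t i).right j)
        = Coalgebra.comul (R := k) (Φ (r.left i)) := by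
      have h1 := LinearMap.congr_fun hΦ_comul (r.left i)
      simp only [LinearMap.comp_apply] at h1
      rw [h1, ← (t i).eq, map_sum]
      simp
    have h := HopfAlgebra.sum_antipode_mul_eq_algebraMap_counit
      (⟨(t i).index, fun j => Φ ((t i).left j), fun j => Φ ((t i).right j), heq⟩ :
        Coalgebra.Repr k (Φ (r.left i)) (H × H))
    have h2 := LinearMap.congr_fun hΦ_counit (r.left i)
    simp only [LinearMap.comp_apply] at h2
    simpa [h2] using h
  have hstep : ∀ i ∈ r.index, ∑ j ∈ (t i).index,
      HopfAlgebra.antipode (R := k) (Φ ((t i).left j)) * (Φ ((t i).right j) * m (r.right i ⊗ₜ c))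
      = Coalgebra.counit (R := k) (r.left i) • m (r.right i ⊗ₜ c) := by
    intro i _
    rw [Finset.sum_congr rfl fun j _ => (mul_assoc _ _ _).symm, ← Finset.sum_mul, hant i,
      ← Algebra.smul_def]
  rw [Finset.sum_congr rfl hstep]
  conv_rhs => rw [← counit_smul_sum y r]
  rw [TensorProduct.sum_tmul, map_sum]
  simp only [← TensorProduct.smul_tmul', map_smul]

lemma trussRHS_apply (a b c : H) (r : Coalgebra.Repr k a (H × H))
    (s : ∀ i, Coalgebra.Repr k (r.right i) (H × H)) :
    trussRHS k Φ (mbar k Φ m) (a ⊗ₜ (b ⊗ₜ c))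
      = ∑ i ∈ r.index, ∑ j ∈ (s i).index,
          mbar k Φ m (r.left i ⊗ₜ b) *
            (HopfAlgebra.antipode (R := k) (Φ ((s i).left j)) *
              mbar k Φ m ((s i).right j ⊗ₜ c)) := by
  have harg : (TensorProduct.map LinearMap.id Coalgebra.comul) (Coalgebra.comul (R := k) a)
      = ∑ i ∈ r.index, ∑ j ∈ (s i).index,
          r.left i ⊗ₜ[k] ((s i).left j ⊗ₜ[k] (s i).right j) := by
    rw [← r.eq, map_sum]
    refine Finset.sum_congr rfl fun i _ => ?_
    rw [TensorProduct.map_tmul, ← (s i).eq]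
    simp [TensorProduct.tmul_sum]
  rw [trussRHS]
  simp only [LinearMap.comp_apply, TensorProduct.map_tmul, LinearMap.id_coe, id_eq]
  rw [harg]
  simp only [TensorProduct.sum_tmul, map_sum, LinearEquiv.coe_coe,
    TensorProduct.tensorTensorTensorComm_tmul, TensorProduct.map_tmul,
    LinearMap.comp_apply, TensorProduct.assoc_tmul, LinearMap.mul'_apply,
    LinearMap.id_coe, id_eq]

end Aux

theorem stmt6 (k H : Type*) [Field k] [Ring H] [HopfAlgebra k H]
    (m : H ⊗[k] H →ₗ[k] H) (Φ : H →ₗ[k] H)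
    (hm_comul : Coalgebra.comul ∘ₗ m
      = (TensorProduct.map m m) ∘ₗ (TensorProduct.tensorTensorTensorComm k H H H H).toLinearMap
          ∘ₗ (TensorProduct.map Coalgebra.comul Coalgebra.comul))
    (hm_counit : Coalgebra.counit ∘ₗ m
      = (TensorProduct.lid k k).toLinearMap ∘ₗ
          TensorProduct.map Coalgebra.counit Coalgebra.counit)
    (hΦ_comul : Coalgebra.comul ∘ₗ Φ = TensorProduct.map Φ Φ ∘ₗ Coalgebra.comul)
    (hΦ_counit : Coalgebra.counit ∘ₗ Φ = Coalgebra.counit)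
    (h3 : Φ ∘ₗ mbar k Φ m = mbar k Φ m ∘ₗ TensorProduct.map LinearMap.id Φ)
    (h4 : m ∘ₗ TensorProduct.map LinearMap.id m
      = m ∘ₗ TensorProduct.map (mbar k Φ m) LinearMap.id ∘ₗ
          (TensorProduct.assoc k H H H).symm.toLinearMap)
    (h5 : m ∘ₗ TensorProduct.map LinearMap.id (LinearMap.mul' k H)
      = (LinearMap.mul' k H) ∘ₗ TensorProduct.map m m ∘ₗ
          (TensorProduct.tensorTensorTensorComm k H H H H).toLinearMap ∘ₗ
          TensorProduct.map Coalgebra.comul LinearMap.id)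
    (hcoc : ∀ a : H, (TensorProduct.comm k H H) (Coalgebra.comul (R := k) a)
      = Coalgebra.comul a)
    :
    mbar k Φ m ∘ₗ TensorProduct.map LinearMap.id (LinearMap.mul' k H)
      = trussRHS k Φ (mbar k Φ m) := by
  classical
  open Coalgebra in
  ext a b c
  simp only [TensorProduct.AlgebraTensorModule.curry_apply, TensorProduct.curry_apply,
    LinearMap.coe_restrictScalars, LinearMap.comp_apply, TensorProduct.map_tmul,
    LinearMap.id_coe, id_eq, LinearMap.mul'_apply]
  set r : Coalgebra.Repr k a (H × H) := Coalgebra.Repr.arbitrary k a with hr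
  set s : ∀ i, Coalgebra.Repr k (r.right i) (H × H) := fun i => Coalgebra.Repr.arbitrary k (r.right i)
    with hs
  set t : ∀ i, Coalgebra.Repr k (r.left i) (H × H) := fun i => Coalgebra.Repr.arbitrary k (r.left i)
    with ht
  have h5' : ∀ i, m (r.right i ⊗ₜ (b * c))
      = ∑ j ∈ (s i).index, m ((s i).left j ⊗ₜ b) * m ((s i).right j ⊗ₜ c) := by
    intro i
    have h := LinearMap.congr_fun h5 (r.right i ⊗ₜ (b ⊗ₜ c))
    simp only [LinearMap.comp_apply, TensorProduct.map_tmul, LinearMap.id_coe, id_eq,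
      LinearMap.mul'_apply, LinearEquiv.coe_coe] at h
    rw [← (s i).eq] at h
    simpa [TensorProduct.sum_tmul, map_sum, TensorProduct.tensorTensorTensorComm_tmul] using h
  rw [mbar_apply m Φ a (b * c) r]
  simp only [h5', Finset.mul_sum]
  rw [trussRHS_apply m Φ a b c r s]
  have hkey : ∀ i ∈ r.index, ∑ j ∈ (s i).index,
      mbar k Φ m (r.left i ⊗ₜ b) * (HopfAlgebra.antipode (R := k) (Φ ((s i).left j)) *
        mbar k Φ m ((s i).right j ⊗ₜ c))
      = mbar k Φ m (r.left i ⊗ₜ b) * m (r.right i ⊗ₜ c) := by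
    intro i _
    rw [← Finset.mul_sum, key m Φ hΦ_comul hΦ_counit _ c (s i)]
  rw [Finset.sum_congr rfl hkey]
  have h2 : ∀ i ∈ r.index, mbar k Φ m (r.left i ⊗ₜ b) * m (r.right i ⊗ₜ c)
      = ∑ j ∈ (t i).index, Φ ((t i).left j) * m ((t i).right j ⊗ₜ b) * m (r.right i ⊗ₜ c) := by
    intro i _
    rw [mbar_apply m Φ _ b (t i), Finset.sum_mul]
  rw [Finset.sum_congr rfl h2]
  have hco := Coalgebra.sum_tmul_tmul_eq r t s
  have hP := congrArg (LinearMap.mul' k H ∘ₗ TensorProduct.map Φ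
      (LinearMap.mul' k H ∘ₗ TensorProduct.map (m ∘ₗ (TensorProduct.mk k H H).flip b)
        (m ∘ₗ (TensorProduct.mk k H H).flip c))) hco
  simp only [map_sum, LinearMap.comp_apply, TensorProduct.map_tmul, LinearMap.mul'_apply,
    TensorProduct.mk_apply, LinearMap.flip_apply] at hP
  rw [← hP]
  exact Finset.sum_congr rfl fun i _ => Finset.sum_congr rfl fun j _ => (mul_assoc _ _ _).symm
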